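/- (Theorem 1) Let N ≥ 2, let A be an irreducible N×N matrix satisfying Condition A1 with normalized positive left eigenvector ξ and Ξ = diag(ξ), let Γ = diag(γ_1,…,γ_n) be positive definite, and suppose the continuous map f : ℝ^n × ℝ⁺ → ℝ^n belongs to QUAD(Δ,ϖ) for some diagonal Δ and ϖ > 0. Let α > 0 and let x_1,…,x_N : [0,∞) → ℝ^n and c : [0,∞) → ℝ be differentiable functions satisfying, for all t ≥ 0, ẋ_i(t) = f(x_i(t),t) + c(t) Σ_{j≠i} a_{ij} Γ (x_j(t) − x_i(t)) for each i, ċ(t) = −(α/2) Σ_{i,j} ξ_i a_{ij} x_i(t)^T Γ x_j(t), and c(0) = 0. Then the coupled systems synchronize: ‖x_i(t) − x_j(t)‖ → 0 as t → ∞ for all i, j, and c(t) converges to a finite limit c₀ ≥ 0. -/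

import Mathlib

open Matrix Filter

namespace Stmt12Aux

variable {N n : ℕ}

def Wf (ξ : Fin N → ℝ) (u : Fin N → Fin n → ℝ) : ℝ :=
  ∑ i, ∑ j, ξ i * ξ j * ∑ k, (u i k - u j k) ^ 2

def Qf (ξ : Fin N → ℝ) (A : Matrix (Fin N) (Fin N) ℝ) (γ : Fin n → ℝ)
    (u : Fin N → Fin n → ℝ) : ℝ :=
  ∑ i, ∑ j, ξ i * A i j * ∑ k, u i k * γ k * u j k

def Rf (ξ : Fin N → ℝ) (A : Matrix (Fin N) (Fin N) ℝ) (γ : Fin n → ℝ)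
    (u : Fin N → Fin n → ℝ) : ℝ :=
  ∑ i, ∑ j, ξ i * A i j * ∑ k, γ k * (u i k - u j k) ^ 2

def Ff (ξ : Fin N → ℝ) (u w : Fin N → Fin n → ℝ) : ℝ :=
  ∑ i, ∑ j, ξ i * ξ j * ∑ k, (u i k - u j k) * (w i k - w j k)

lemma oneD_R (ξ a : Fin N → ℝ) (A : Matrix (Fin N) (Fin N) ℝ)
    (hrow : ∀ i, ∑ j, A i j = 0) (hcol : ∀ j, ∑ i, ξ i * A i j = 0) :
    ∑ i, ∑ j, ξ i * A i j * (a i - a j) ^ 2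
      = -2 * ∑ i, ∑ j, ξ i * A i j * (a i * a j) := by
  have h1 : ∑ i, ∑ j, ξ i * A i j * a i ^ 2 = 0 := by
    refine Finset.sum_eq_zero fun i _ => ?_
    calc ∑ j, ξ i * A i j * a i ^ 2 = ∑ j, (ξ i * a i ^ 2) * A i j :=
          Finset.sum_congr rfl fun j _ => by ring
      _ = (ξ i * a i ^ 2) * ∑ j, A i j := by rw [Finset.mul_sum]
      _ = 0 := by rw [hrow i, mul_zero]
  have h2 : ∑ i, ∑ j, ξ i * A i j * a j ^ 2 = 0 := by
    rw [Finset.sum_comm]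
    refine Finset.sum_eq_zero fun j _ => ?_
    calc ∑ i, ξ i * A i j * a j ^ 2 = (∑ i, ξ i * A i j) * a j ^ 2 := by
          rw [Finset.sum_mul]
      _ = 0 := by rw [hcol j, zero_mul]
  have key : ∑ i, ∑ j, ξ i * A i j * (a i - a j) ^ 2
      = (∑ i, ∑ j, ξ i * A i j * a i ^ 2) + (∑ i, ∑ j, ξ i * A i j * a j ^ 2)
        - 2 * ∑ i, ∑ j, ξ i * A i j * (a i * a j) := by
    rw [Finset.mul_sum, ← Finset.sum_add_distrib, ← Finset.sum_sub_distrib]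
    refine Finset.sum_congr rfl fun i _ => ?_
    rw [Finset.mul_sum, ← Finset.sum_add_distrib, ← Finset.sum_sub_distrib]
    exact Finset.sum_congr rfl fun j _ => by ring
  rw [key, h1, h2]; ring

lemma oneD_T (ξ a : Fin N → ℝ) (A : Matrix (Fin N) (Fin N) ℝ)
    (hsum : ∑ i, ξ i = 1) (hcol : ∀ j, ∑ i, ξ i * A i j = 0) :
    ∑ i, ∑ j, ξ i * ξ j * ((a i - a j) * ((∑ l, A i l * a l) - (∑ l, A j l * a l)))
      = 2 * ∑ i, ∑ j, ξ i * A i j * (a i * a j) := by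
  set y : Fin N → ℝ := fun i => ∑ l, A i l * a l with hy
  have hy0 : ∑ j, ξ j * y j = 0 := by
    calc ∑ j, ξ j * y j = ∑ j, ∑ l, ξ j * (A j l * a l) := by
          refine Finset.sum_congr rfl fun j _ => ?_
          rw [hy, Finset.mul_sum]
      _ = ∑ l, ∑ j, ξ j * (A j l * a l) := Finset.sum_comm
      _ = ∑ l, (∑ j, ξ j * A j l) * a l := by
          refine Finset.sum_congr rfl fun l _ => ?_
          rw [Finset.sum_mul]
          exact Finset.sum_congr rfl fun j _ => by ring
      _ = 0 := by simp [hcol]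
  have hS : ∑ i, ξ i * (a i * y i) = ∑ i, ∑ j, ξ i * A i j * (a i * a j) := by
    refine Finset.sum_congr rfl fun i _ => ?_
    rw [hy, Finset.mul_sum, Finset.mul_sum]
    exact Finset.sum_congr rfl fun l _ => by ring
  have key : ∑ i, ∑ j, ξ i * ξ j * ((a i - a j) * (y i - y j))
      = (∑ i, ∑ j, (ξ i * (a i * y i)) * ξ j) + (∑ i, ∑ j, ξ i * (ξ j * (a j * y j)))
        - ((∑ i, ∑ j, (ξ i * a i) * (ξ j * y j)) + (∑ i, ∑ j, (ξ i * y i) * (ξ j * a j))) := by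
    rw [← Finset.sum_add_distrib, ← Finset.sum_add_distrib, ← Finset.sum_sub_distrib]
    refine Finset.sum_congr rfl fun i _ => ?_
    rw [← Finset.sum_add_distrib, ← Finset.sum_add_distrib, ← Finset.sum_sub_distrib]
    exact Finset.sum_congr rfl fun j _ => by ring
  have hD1 : ∑ i, ∑ j, (ξ i * (a i * y i)) * ξ j = ∑ i, ξ i * (a i * y i) := by
    refine Finset.sum_congr rfl fun i _ => ?_
    rw [← Finset.mul_sum, hsum, mul_one]
  have hD2 : ∑ i, ∑ j, ξ i * (ξ j * (a j * y j)) = ∑ j, ξ j * (a j * y j) := by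
    have : ∀ i : Fin N, ∑ j, ξ i * (ξ j * (a j * y j)) = ξ i * ∑ j, ξ j * (a j * y j) :=
      fun i => (Finset.mul_sum _ _ _).symm
    simp only [this]
    rw [← Finset.sum_mul, hsum, one_mul]
  have hD3 : ∑ i, ∑ j, (ξ i * a i) * (ξ j * y j) = 0 := by
    rw [← Finset.sum_mul_sum, hy0, mul_zero]
  have hD4 : ∑ i, ∑ j, (ξ i * y i) * (ξ j * a j) = 0 := by
    rw [← Finset.sum_mul_sum, hy0, zero_mul]
  rw [key, hD1, hD2, hD3, hD4, hS]; ring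

lemma swap_k (cst : Fin N → Fin N → ℝ) (g : Fin N → Fin N → Fin n → ℝ) :
    ∑ i, ∑ j, cst i j * ∑ k, g i j k = ∑ k, ∑ i, ∑ j, cst i j * g i j k := by
  simp only [Finset.mul_sum]
  rw [show (∑ i, ∑ j, ∑ k, cst i j * g i j k) = ∑ i, ∑ k, ∑ j, cst i j * g i j k from
    Finset.sum_congr rfl fun i _ => Finset.sum_comm]
  exact Finset.sum_comm

lemma Qf_eq (ξ : Fin N → ℝ) (A : Matrix (Fin N) (Fin N) ℝ) (γ : Fin n → ℝ)
    (u : Fin N → Fin n → ℝ) :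
    Qf ξ A γ u = ∑ k, γ k * ∑ i, ∑ j, ξ i * A i j * (u i k * u j k) := by
  rw [Qf, swap_k]
  refine Finset.sum_congr rfl fun k _ => ?_
  rw [Finset.mul_sum]
  refine Finset.sum_congr rfl fun i _ => ?_
  rw [Finset.mul_sum]
  exact Finset.sum_congr rfl fun j _ => by ring

lemma Rf_eq_negtwo_Qf (ξ : Fin N → ℝ) (A : Matrix (Fin N) (Fin N) ℝ) (γ : Fin n → ℝ)
    (hrow : ∀ i, ∑ j, A i j = 0) (hcol : ∀ j, ∑ i, ξ i * A i j = 0)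
    (u : Fin N → Fin n → ℝ) :
    Rf ξ A γ u = -2 * Qf ξ A γ u := by
  rw [Rf, swap_k, Qf_eq, Finset.mul_sum]
  refine Finset.sum_congr rfl fun k _ => ?_
  calc ∑ i, ∑ j, ξ i * A i j * (γ k * (u i k - u j k) ^ 2)
      = γ k * ∑ i, ∑ j, ξ i * A i j * (u i k - u j k) ^ 2 := by
        rw [Finset.mul_sum]
        refine Finset.sum_congr rfl fun i _ => ?_
        rw [Finset.mul_sum]
        exact Finset.sum_congr rfl fun j _ => by ring
    _ = γ k * (-2 * ∑ i, ∑ j, ξ i * A i j * (u i k * u j k)) := by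
        rw [oneD_R ξ (fun i => u i k) A hrow hcol]
    _ = -2 * (γ k * ∑ i, ∑ j, ξ i * A i j * (u i k * u j k)) := by ring

lemma derivW_eq (ξ : Fin N → ℝ) (A : Matrix (Fin N) (Fin N) ℝ) (γ : Fin n → ℝ)
    (hsum : ∑ i, ξ i = 1) (hcol : ∀ j, ∑ i, ξ i * A i j = 0)
    (u w : Fin N → Fin n → ℝ) (cc : ℝ) :
    ∑ i, ∑ j, ξ i * ξ j * ∑ k, (2 * (u i k - u j k) *
        ((w i k + cc * (γ k * ∑ l, A i l * u l k))
          - (w j k + cc * (γ k * ∑ l, A j l * u l k))))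
      = 2 * Ff ξ u w + 4 * cc * Qf ξ A γ u := by
  have step1 : ∀ i j, ξ i * ξ j * ∑ k, (2 * (u i k - u j k) *
        ((w i k + cc * (γ k * ∑ l, A i l * u l k))
          - (w j k + cc * (γ k * ∑ l, A j l * u l k))))
      = 2 * (ξ i * ξ j * ∑ k, (u i k - u j k) * (w i k - w j k))
        + (2 * cc) * (ξ i * ξ j * ∑ k, γ k *
            ((u i k - u j k) * ((∑ l, A i l * u l k) - (∑ l, A j l * u l k)))) := by
    intro i j
    have hterm : ∀ k : Fin n, 2 * (u i k - u j k) *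
        ((w i k + cc * (γ k * ∑ l, A i l * u l k))
          - (w j k + cc * (γ k * ∑ l, A j l * u l k)))
      = 2 * ((u i k - u j k) * (w i k - w j k))
        + (2 * cc) * (γ k * ((u i k - u j k) * ((∑ l, A i l * u l k) - (∑ l, A j l * u l k)))) := by
      intro k; ring
    rw [Finset.sum_congr rfl fun k _ => hterm k, Finset.sum_add_distrib,
      ← Finset.mul_sum, ← Finset.mul_sum]
    ring
  rw [Finset.sum_congr rfl fun i _ => Finset.sum_congr rfl fun j _ => step1 i j]
  simp only [Finset.sum_add_distrib, ← Finset.mul_sum]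
  have hT : ∑ i, ∑ j, ξ i * ξ j * ∑ k, γ k *
      ((u i k - u j k) * ((∑ l, A i l * u l k) - (∑ l, A j l * u l k)))
      = 2 * Qf ξ A γ u := by
    rw [swap_k, Qf_eq, Finset.mul_sum]
    refine Finset.sum_congr rfl fun k _ => ?_
    calc ∑ i, ∑ j, ξ i * ξ j * (γ k * ((u i k - u j k) * ((∑ l, A i l * u l k) - (∑ l, A j l * u l k))))
        = γ k * ∑ i, ∑ j, ξ i * ξ j * ((u i k - u j k) * ((∑ l, A i l * u l k) - (∑ l, A j l * u l k))) := by
          rw [Finset.mul_sum]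
          refine Finset.sum_congr rfl fun i _ => ?_
          rw [Finset.mul_sum]
          exact Finset.sum_congr rfl fun j _ => by ring
      _ = γ k * (2 * ∑ i, ∑ j, ξ i * A i j * (u i k * u j k)) := by
          rw [oneD_T ξ (fun i => u i k) A hsum hcol]
      _ = 2 * (γ k * ∑ i, ∑ j, ξ i * A i j * (u i k * u j k)) := by ring
  rw [hT, Ff]
  ring

lemma pull2 (c2 : ℝ) (cst g : Fin N → Fin N → ℝ) :
    ∑ i, ∑ j, cst i j * (c2 * g i j) = c2 * ∑ i, ∑ j, cst i j * g i j := by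
  rw [Finset.mul_sum]
  refine Finset.sum_congr rfl fun i _ => ?_
  rw [Finset.mul_sum]
  exact Finset.sum_congr rfl fun j _ => by ring

lemma Wf_nonneg (ξ : Fin N → ℝ) (hξ : ∀ i, 0 ≤ ξ i) (u : Fin N → Fin n → ℝ) :
    0 ≤ Wf ξ u := by
  refine Finset.sum_nonneg fun i _ => Finset.sum_nonneg fun j _ => ?_
  have : (0:ℝ) ≤ ∑ k, (u i k - u j k) ^ 2 :=
    Finset.sum_nonneg fun k _ => sq_nonneg _
  exact mul_nonneg (mul_nonneg (hξ i) (hξ j)) this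

lemma Rf_term_nonneg (ξ : Fin N → ℝ) (A : Matrix (Fin N) (Fin N) ℝ) (γ : Fin n → ℝ)
    (hoff : ∀ i j, i ≠ j → 0 ≤ A i j) (hξ : ∀ i, 0 ≤ ξ i) (hγ : ∀ k, 0 ≤ γ k)
    (u : Fin N → Fin n → ℝ) (i j : Fin N) :
    0 ≤ ξ i * A i j * ∑ k, γ k * (u i k - u j k) ^ 2 := by
  rcases eq_or_ne i j with rfl | hij
  · simp
  · have h1 : 0 ≤ ∑ k, γ k * (u i k - u j k) ^ 2 :=
      Finset.sum_nonneg fun k _ => mul_nonneg (hγ k) (sq_nonneg _)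
    exact mul_nonneg (mul_nonneg (hξ i) (hoff i j hij)) h1

lemma Rf_nonneg (ξ : Fin N → ℝ) (A : Matrix (Fin N) (Fin N) ℝ) (γ : Fin n → ℝ)
    (hoff : ∀ i j, i ≠ j → 0 ≤ A i j) (hξ : ∀ i, 0 ≤ ξ i) (hγ : ∀ k, 0 ≤ γ k)
    (u : Fin N → Fin n → ℝ) : 0 ≤ Rf ξ A γ u :=
  Finset.sum_nonneg fun i _ => Finset.sum_nonneg fun j _ =>
    Rf_term_nonneg ξ A γ hoff hξ hγ u i j

lemma pair_le_Wf (ξ : Fin N → ℝ) (hξ : ∀ i, 0 ≤ ξ i) (u : Fin N → Fin n → ℝ)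
    (i j : Fin N) :
    ξ i * ξ j * ∑ k, (u i k - u j k) ^ 2 ≤ Wf ξ u := by
  refine (Finset.single_le_sum (f := fun j' => ξ i * ξ j' * ∑ k, (u i k - u j' k) ^ 2)
    (fun j' _ => mul_nonneg (mul_nonneg (hξ i) (hξ j'))
      (Finset.sum_nonneg fun k _ => sq_nonneg _)) (Finset.mem_univ j)).trans ?_
  exact Finset.single_le_sum (f := fun i' => ∑ j', ξ i' * ξ j' * ∑ k, (u i' k - u j' k) ^ 2)
    (fun i' _ => Finset.sum_nonneg fun j' _ => mul_nonneg (mul_nonneg (hξ i') (hξ j'))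
      (Finset.sum_nonneg fun k _ => sq_nonneg _)) (Finset.mem_univ i)

lemma Wf_shift (ξ : Fin N → ℝ) (r : ℝ) (b : Fin n → ℝ) (u : Fin N → Fin n → ℝ) :
    Wf ξ (fun i k => r * (u i k - b k)) = r ^ 2 * Wf ξ u := by
  rw [Wf, Wf, ← pull2]
  refine Finset.sum_congr rfl fun i _ => Finset.sum_congr rfl fun j _ => ?_
  congr 1
  rw [Finset.mul_sum]
  exact Finset.sum_congr rfl fun k _ => by ring

lemma Rf_shift (ξ : Fin N → ℝ) (A : Matrix (Fin N) (Fin N) ℝ) (γ : Fin n → ℝ)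
    (r : ℝ) (b : Fin n → ℝ) (u : Fin N → Fin n → ℝ) :
    Rf ξ A γ (fun i k => r * (u i k - b k)) = r ^ 2 * Rf ξ A γ u := by
  rw [Rf, Rf, ← pull2]
  refine Finset.sum_congr rfl fun i _ => Finset.sum_congr rfl fun j _ => ?_
  congr 1
  rw [Finset.mul_sum]
  exact Finset.sum_congr rfl fun k _ => by ring

lemma Wf_continuous (ξ : Fin N → ℝ) :
    Continuous (fun u : Fin N → Fin n → ℝ => Wf ξ u) := by
  unfold Wf; fun_prop

lemma Rf_continuous (ξ : Fin N → ℝ) (A : Matrix (Fin N) (Fin N) ℝ) (γ : Fin n → ℝ) :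
    Continuous (fun u : Fin N → Fin n → ℝ => Rf ξ A γ u) := by
  unfold Rf; fun_prop

lemma gap (hN : 0 < N) (A : Matrix (Fin N) (Fin N) ℝ)
    (hoff : ∀ i j, i ≠ j → 0 ≤ A i j)
    (hirr : ∀ S : Finset (Fin N), S.Nonempty → S ≠ Finset.univ →
      ∃ i ∈ S, ∃ j, j ∉ S ∧ A i j ≠ 0)
    (ξ : Fin N → ℝ) (hξpos : ∀ i, 0 < ξ i) (hξsum : ∑ i, ξ i = 1)
    (γ : Fin n → ℝ) (hγ : ∀ k, 0 < γ k) :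
    ∃ κ : ℝ, 0 < κ ∧ ∀ u : Fin N → Fin n → ℝ, κ * Wf ξ u ≤ Rf ξ A γ u := by
  classical
  have hξnn : ∀ i, 0 ≤ ξ i := fun i => (hξpos i).le
  have hγnn : ∀ k, 0 ≤ γ k := fun k => (hγ k).le
  set K : Set (Fin N → Fin n → ℝ) :=
    {u | (∀ k, ∑ i, ξ i * u i k = 0) ∧ Wf ξ u = 1} with hKdef
  have hmemK : ∀ u : Fin N → Fin n → ℝ, Wf ξ u ≠ 0 →
      (fun i k => (Real.sqrt (Wf ξ u))⁻¹ * (u i k - ∑ j, ξ j * u j k)) ∈ K := by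
    intro u hu
    have hWpos : 0 < Wf ξ u := lt_of_le_of_ne (Wf_nonneg ξ hξnn u) (Ne.symm hu)
    have hs : Real.sqrt (Wf ξ u) ^ 2 = Wf ξ u := Real.sq_sqrt hWpos.le
    have hspos : 0 < Real.sqrt (Wf ξ u) := Real.sqrt_pos.mpr hWpos
    constructor
    · intro k
      have : ∀ i : Fin N, ξ i * ((Real.sqrt (Wf ξ u))⁻¹ * (u i k - ∑ j, ξ j * u j k))
          = (Real.sqrt (Wf ξ u))⁻¹ * (ξ i * u i k - ξ i * (∑ j, ξ j * u j k)) := by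
        intro i; ring
      rw [Finset.sum_congr rfl fun i _ => this i, ← Finset.mul_sum,
        Finset.sum_sub_distrib, ← Finset.sum_mul, hξsum]
      simp
    · rw [Wf_shift, inv_pow, hs]
      exact inv_mul_cancel₀ hu
  by_cases hKne : K.Nonempty
  · have hclosed : IsClosed K := by
      have : K = (⋂ k, {u : Fin N → Fin n → ℝ | ∑ i, ξ i * u i k = 0})
          ∩ {u | Wf ξ u = 1} := by
        ext u; simp [hKdef, Set.mem_iInter]
      rw [this]
      refine IsClosed.inter (isClosed_iInter fun k =>
        isClosed_eq (by fun_prop) continuous_const) ?_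
      exact isClosed_eq (Wf_continuous ξ) continuous_const
    obtain ⟨imin, _, hminξ⟩ := Finset.exists_min_image Finset.univ ξ
      ⟨⟨0, hN⟩, Finset.mem_univ _⟩
    set ε := ξ imin with hε
    have hεpos : 0 < ε := hξpos imin
    have hεle : ∀ i, ε ≤ ξ i := fun i => hminξ i (Finset.mem_univ i)
    have hbound : ∀ u ∈ K, ‖u‖ ≤ ε⁻¹ := by
      intro u hu
      rw [pi_norm_le_iff_of_nonneg (by positivity)]
      intro i
      rw [pi_norm_le_iff_of_nonneg (by positivity)]
      intro k
      rw [Real.norm_eq_abs]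
      have hpair : ∀ j, |u i k - u j k| ≤ ε⁻¹ := by
        intro j
        have h1 : ξ i * ξ j * ∑ k', (u i k' - u j k') ^ 2 ≤ 1 := by
          rw [← hu.2]
          exact pair_le_Wf ξ hξnn u i j
        have h2 : (u i k - u j k) ^ 2 ≤ ∑ k', (u i k' - u j k') ^ 2 :=
          Finset.single_le_sum (f := fun k' => (u i k' - u j k') ^ 2)
            (fun k' _ => sq_nonneg _) (Finset.mem_univ k)
        have h3 : ε * ε * (u i k - u j k) ^ 2 ≤ 1 := by
          have hstep := mul_le_mul_of_nonneg_left h2 (mul_nonneg hεpos.le hεpos.le)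
          refine hstep.trans (le_trans ?_ h1)
          have hmm : ε * ε ≤ ξ i * ξ j :=
            mul_le_mul (hεle i) (hεle j) hεpos.le (hξnn i)
          exact mul_le_mul_of_nonneg_right hmm
            (Finset.sum_nonneg fun k' _ => sq_nonneg _)
        rw [abs_le]
        constructor <;>
          nlinarith [h3, hεpos, inv_pos.mpr hεpos, mul_inv_cancel₀ (ne_of_gt hεpos),
            sq_nonneg (ε * (u i k - u j k) + 1), sq_nonneg (ε * (u i k - u j k) - 1)]
      have hzero : ∑ j, ξ j * u j k = 0 := hu.1 k
      have hrep : u i k = ∑ j, ξ j * (u i k - u j k) := by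
        rw [Finset.sum_congr rfl fun j _ => mul_sub (ξ j) (u i k) (u j k),
          Finset.sum_sub_distrib, ← Finset.sum_mul, hξsum, hzero]
        ring
      rw [hrep]
      refine (Finset.abs_sum_le_sum_abs _ _).trans ?_
      calc ∑ j, |ξ j * (u i k - u j k)| ≤ ∑ j, ξ j * ε⁻¹ := by
            refine Finset.sum_le_sum fun j _ => ?_
            rw [abs_mul, abs_of_nonneg (hξnn j)]
            exact mul_le_mul_of_nonneg_left (hpair j) (hξnn j)
        _ = ε⁻¹ := by rw [← Finset.sum_mul, hξsum, one_mul]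
    have hKcomp : IsCompact K := by
      refine Metric.isCompact_of_isClosed_isBounded hclosed ?_
      refine (Metric.isBounded_closedBall (x := (0 : Fin N → Fin n → ℝ))
        (r := ε⁻¹)).subset ?_
      intro u hu
      rw [Metric.mem_closedBall, dist_zero_right]
      exact hbound u hu
    obtain ⟨u₀, hu₀K, hu₀min⟩ := hKcomp.exists_isMinOn hKne
      (Rf_continuous ξ A γ).continuousOn
    refine ⟨Rf ξ A γ u₀, ?_, ?_⟩
    · rcases (Rf_nonneg ξ A γ hoff hξnn hγnn u₀).lt_or_eq with h | h
      · exact h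
      · exfalso
        have hzero : Rf ξ A γ u₀ = 0 := h.symm
        have hterm : ∀ i j, ξ i * A i j * ∑ k, γ k * (u₀ i k - u₀ j k) ^ 2 = 0 := by
          have h1 := (Finset.sum_eq_zero_iff_of_nonneg
            (fun i _ => Finset.sum_nonneg fun j _ =>
              Rf_term_nonneg ξ A γ hoff hξnn hγnn u₀ i j)).mp hzero
          intro i j
          have h2 := (Finset.sum_eq_zero_iff_of_nonneg
            (fun j _ => Rf_term_nonneg ξ A γ hoff hξnn hγnn u₀ i j)).mp
            (h1 i (Finset.mem_univ i))
          exact h2 j (Finset.mem_univ j)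
        have heq : ∀ i j, i ≠ j → A i j ≠ 0 → ∀ k, u₀ i k = u₀ j k := by
          intro i j hij hA k
          have hsum0 : ∑ k', γ k' * (u₀ i k' - u₀ j k') ^ 2 = 0 := by
            have hterm' := hterm i j
            have hc : ξ i * A i j ≠ 0 := mul_ne_zero (hξpos i).ne' hA
            exact (mul_eq_zero.mp hterm').resolve_left hc
          have h5 := (Finset.sum_eq_zero_iff_of_nonneg
            (fun k' _ => mul_nonneg (hγnn k') (sq_nonneg _))).mp hsum0 k (Finset.mem_univ k)
          have h4 : (u₀ i k - u₀ j k) ^ 2 = 0 :=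
            (mul_eq_zero.mp h5).resolve_left (hγ k).ne'
          have h6 := pow_eq_zero_iff (n := 2) (by norm_num) |>.mp h4
          linarith [sub_eq_zero.mp h6]
        set i₀ : Fin N := ⟨0, hN⟩ with hi₀
        set S : Finset (Fin N) := Finset.univ.filter (fun j => ∀ k, u₀ j k = u₀ i₀ k)
          with hSdef
        have hi₀S : i₀ ∈ S := by simp [hSdef]
        have hSuniv : S = Finset.univ := by
          by_contra hSne
          obtain ⟨i, hiS, j, hjS, hAij⟩ := hirr S ⟨i₀, hi₀S⟩ hSne
          have hij : i ≠ j := fun h' => hjS (h' ▸ hiS)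
          have hjmem : j ∈ S := by
            rw [hSdef, Finset.mem_filter]
            refine ⟨Finset.mem_univ j, fun k => ?_⟩
            rw [← heq i j hij hAij k]
            exact (Finset.mem_filter.mp hiS).2 k
          exact hjS hjmem
        have hall : ∀ j k, u₀ j k = u₀ i₀ k := by
          intro j k
          have hmem : j ∈ S := hSuniv ▸ Finset.mem_univ j
          exact (Finset.mem_filter.mp hmem).2 k
        have hW0 : Wf ξ u₀ = 0 := by
          rw [Wf]
          refine Finset.sum_eq_zero fun i _ => Finset.sum_eq_zero fun j _ => ?_
          have hz : ∑ k, (u₀ i k - u₀ j k) ^ 2 = 0 :=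
            Finset.sum_eq_zero fun k _ => by rw [hall i k, hall j k]; ring
          rw [hz, mul_zero]
        rw [hu₀K.2] at hW0
        norm_num at hW0
    · intro u
      rcases eq_or_ne (Wf ξ u) 0 with h0 | h0
      · rw [h0, mul_zero]
        exact Rf_nonneg ξ A γ hoff hξnn hγnn u
      · have hWpos : 0 < Wf ξ u := lt_of_le_of_ne (Wf_nonneg ξ hξnn u) (Ne.symm h0)
        set s := Real.sqrt (Wf ξ u) with hs
        have hs2 : s ^ 2 = Wf ξ u := Real.sq_sqrt hWpos.le
        have hspos : 0 < s := Real.sqrt_pos.mpr hWpos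
        have hvK := hmemK u h0
        have hmin : Rf ξ A γ u₀ ≤ Rf ξ A γ (fun i k => s⁻¹ * (u i k - ∑ j, ξ j * u j k)) :=
          hu₀min hvK
        rw [Rf_shift ξ A γ s⁻¹ _ u] at hmin
        have hfin : Rf ξ A γ u₀ * Wf ξ u ≤ s⁻¹ ^ 2 * Rf ξ A γ u * Wf ξ u :=
          mul_le_mul_of_nonneg_right hmin hWpos.le
        refine hfin.trans_eq ?_
        rw [inv_pow, hs2]
        field_simp
  · refine ⟨1, one_pos, fun u => ?_⟩
    rcases eq_or_ne (Wf ξ u) 0 with h0 | h0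
    · rw [h0, mul_zero]
      exact Rf_nonneg ξ A γ hoff hξnn hγnn u
    · exact absurd ⟨_, hmemK u h0⟩ hKne

lemma antitoneOn_of_hasDerivAt {g g' : ℝ → ℝ} {a : ℝ}
    (hd : ∀ t, a ≤ t → HasDerivAt g (g' t) t)
    (hle : ∀ t, a ≤ t → g' t ≤ 0) : AntitoneOn g (Set.Ici a) := by
  refine antitoneOn_of_deriv_nonpos (convex_Ici a) ?_ ?_ ?_
  · exact fun t ht => (hd t ht).continuousAt.continuousWithinAt
  · intro t ht
    rw [interior_Ici] at ht
    exact ((hd t ht.le).differentiableAt).differentiableWithinAt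
  · intro t ht
    rw [interior_Ici] at ht
    rw [(hd t ht.le).deriv]
    exact hle t ht.le

lemma monotoneOn_of_hasDerivAt {g g' : ℝ → ℝ} {a : ℝ}
    (hd : ∀ t, a ≤ t → HasDerivAt g (g' t) t)
    (hle : ∀ t, a ≤ t → 0 ≤ g' t) : MonotoneOn g (Set.Ici a) := by
  refine monotoneOn_of_deriv_nonneg (convex_Ici a) ?_ ?_ ?_
  · exact fun t ht => (hd t ht).continuousAt.continuousWithinAt
  · intro t ht
    rw [interior_Ici] at ht
    exact ((hd t ht.le).differentiableAt).differentiableWithinAt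
  · intro t ht
    rw [interior_Ici] at ht
    rw [(hd t ht.le).deriv]
    exact hle t ht.le

lemma tendsto_of_monotoneOn {g : ℝ → ℝ} {a M : ℝ}
    (hm : MonotoneOn g (Set.Ici a)) (hb : ∀ t, a ≤ t → g t ≤ M) :
    ∃ L, Tendsto g atTop (nhds L) ∧ g a ≤ L := by
  set h : ℝ → ℝ := fun t => g (max t a) with hh
  have hmono : Monotone h := fun s t hst =>
    hm (le_max_right s a) (le_max_right t a) (max_le_max hst le_rfl)
  have hbdd : BddAbove (Set.range h) := by
    refine ⟨M, ?_⟩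
    rintro y ⟨t, rfl⟩
    exact hb _ (le_max_right t a)
  refine ⟨⨆ t, h t, ?_, ?_⟩
  · have hten := tendsto_atTop_ciSup hmono hbdd
    refine hten.congr' ?_
    filter_upwards [eventually_ge_atTop a] with t ht
    rw [hh]; simp [max_eq_left ht]
  · have hha : h a ≤ ⨆ t, h t := le_ciSup hbdd a
    simpa [hh] using hha

lemma tendsto_of_antitoneOn {g : ℝ → ℝ} {a M : ℝ}
    (hm : AntitoneOn g (Set.Ici a)) (hb : ∀ t, a ≤ t → M ≤ g t) :
    ∃ L, Tendsto g atTop (nhds L) := by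
  have hm' : MonotoneOn (fun t => -g t) (Set.Ici a) := fun s hs t ht hst =>
    neg_le_neg (hm hs ht hst)
  obtain ⟨L, hL, _⟩ := tendsto_of_monotoneOn hm' (fun t ht => neg_le_neg (hb t ht))
  exact ⟨-L, by simpa using hL.neg⟩

lemma coupling_eq (A : Matrix (Fin N) (Fin N) ℝ)
    (hdiag : ∀ i, A i i = -∑ j ∈ Finset.univ.erase i, A i j)
    (b : Fin N → ℝ) (gk : ℝ) (i : Fin N) :
    ∑ j ∈ Finset.univ.erase i, A i j * (gk * (b j - b i)) = gk * ∑ l, A i l * b l := by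
  have hsplit : ∑ l, A i l * b l
      = A i i * b i + ∑ j ∈ Finset.univ.erase i, A i j * b j :=
    (Finset.add_sum_erase _ _ (Finset.mem_univ i)).symm
  rw [hsplit, hdiag i]
  have hterm : ∀ j, A i j * (gk * (b j - b i)) = gk * (A i j * b j) - (A i j) * (gk * b i) := by
    intro j; ring
  rw [Finset.sum_congr rfl fun j _ => hterm j, Finset.sum_sub_distrib,
    ← Finset.mul_sum, ← Finset.sum_mul]
  ring

end Stmt12Aux

/-- Theorem 1: linearly coupled systems
ẋᵢ = f(xᵢ,t) + c(t) Σ_{j≠i} a_{ij} Γ(xⱼ − xᵢ) with adaptive coupling strength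
ċ = −(α/2) Σᵢⱼ ξᵢ a_{ij} xᵢᵀΓxⱼ, c(0) = 0, where A is irreducible and satisfies
Condition A1 with normalized positive left 0-eigenvector ξ, Γ = diag(γ) > 0, and
f ∈ QUAD(Δ,ϖ). Then the system synchronizes: ‖xᵢ(t) − xⱼ(t)‖ → 0 for all i,j,
and c(t) converges to a finite limit c₀ ≥ 0. -/
theorem stmt12 (N n : ℕ) (hN : 2 ≤ N) (A : Matrix (Fin N) (Fin N) ℝ)
    (hoff : ∀ i j, i ≠ j → 0 ≤ A i j)
    (hdiag : ∀ i, A i i = -∑ j ∈ Finset.univ.erase i, A i j)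
    (hirr : ∀ S : Finset (Fin N), S.Nonempty → S ≠ Finset.univ →
      ∃ i ∈ S, ∃ j, j ∉ S ∧ A i j ≠ 0)
    (ξ : Fin N → ℝ) (hξpos : ∀ i, 0 < ξ i) (hξsum : ∑ i, ξ i = 1)
    (hξeig : Matrix.vecMul ξ A = 0)
    (γ : Fin n → ℝ) (hγ : ∀ k, 0 < γ k)
    (δ : Fin n → ℝ) (ϖ : ℝ) (hϖ : 0 < ϖ)
    (f : (Fin n → ℝ) → ℝ → (Fin n → ℝ))
    (hf : Continuous fun p : (Fin n → ℝ) × ℝ => f p.1 p.2)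
    (hQUAD : ∀ x y : Fin n → ℝ, ∀ t : ℝ, 0 ≤ t →
      (∑ k, (x k - y k) * (f x t k - f y t k)) - (∑ k, δ k * (x k - y k) ^ 2)
        ≤ -ϖ * ∑ k, (x k - y k) ^ 2)
    (α : ℝ) (hα : 0 < α)
    (x : Fin N → ℝ → (Fin n → ℝ)) (c : ℝ → ℝ) (hc0 : c 0 = 0)
    (hODE : ∀ i, ∀ t : ℝ, 0 ≤ t →
      HasDerivAt (x i)
        (fun k => f (x i t) t k
          + c t * ∑ j ∈ Finset.univ.erase i, A i j * (γ k * (x j t k - x i t k))) t)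
    (hcODE : ∀ t : ℝ, 0 ≤ t →
      HasDerivAt c
        (-(α / 2) * ∑ i, ∑ j, ξ i * A i j * ∑ k, x i t k * γ k * x j t k) t) :
    (∀ i j, Tendsto (fun t => ‖x i t - x j t‖) atTop (nhds 0)) ∧
    ∃ c₀ : ℝ, 0 ≤ c₀ ∧ Tendsto c atTop (nhds c₀) := by
  classical
  have hN0 : 0 < N := by omega
  have hαne : α ≠ 0 := ne_of_gt hα
  have hrow : ∀ i, ∑ j, A i j = 0 := by
    intro i
    rw [← Finset.add_sum_erase _ _ (Finset.mem_univ i), hdiag i]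
    ring
  have hcol : ∀ j, ∑ i, ξ i * A i j = 0 := by
    intro j
    have h := congrFun hξeig j
    simpa [Matrix.vecMul, dotProduct] using h
  have hξnn : ∀ i, 0 ≤ ξ i := fun i => (hξpos i).le
  have hγnn : ∀ k, 0 ≤ γ k := fun k => (hγ k).le
  obtain ⟨κ, hκpos, hgap⟩ := Stmt12Aux.gap hN0 A hoff hirr ξ hξpos hξsum γ hγ
  set D : ℝ := ∑ k, |δ k| with hDdef
  have hD0 : 0 ≤ D := Finset.sum_nonneg fun k _ => abs_nonneg _
  set m : ℝ := D / κ with hmdef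
  have hm0 : 0 ≤ m := div_nonneg hD0 hκpos.le
  have hmκ : m * κ = D := by
    rw [hmdef]; field_simp
  clear_value m
  clear_value D
  have hRQ : ∀ u : Fin N → Fin n → ℝ,
      Stmt12Aux.Rf ξ A γ u = -2 * Stmt12Aux.Qf ξ A γ u :=
    Stmt12Aux.Rf_eq_negtwo_Qf ξ A γ hrow hcol
  have hR0 : ∀ u, 0 ≤ Stmt12Aux.Rf ξ A γ u :=
    Stmt12Aux.Rf_nonneg ξ A γ hoff hξnn hγnn
  have hW0 : ∀ u : Fin N → Fin n → ℝ, 0 ≤ Stmt12Aux.Wf ξ u := Stmt12Aux.Wf_nonneg ξ hξnn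
  -- derivative of c in Qf form
  have hcD : ∀ t, 0 ≤ t →
      HasDerivAt c (-(α / 2) * Stmt12Aux.Qf ξ A γ (fun i => x i t)) t :=
    fun t ht => hcODE t ht
  -- rewritten node ODE
  have hODE' : ∀ i, ∀ t, 0 ≤ t → HasDerivAt (x i)
      (fun k => f (x i t) t k + c t * (γ k * ∑ l, A i l * x l t k)) t := by
    intro i t ht
    have h := hODE i t ht
    have he : (fun k => f (x i t) t k
        + c t * ∑ j ∈ Finset.univ.erase i, A i j * (γ k * (x j t k - x i t k)))
        = (fun k => f (x i t) t k + c t * (γ k * ∑ l, A i l * x l t k)) := by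
      funext k
      rw [Stmt12Aux.coupling_eq A hdiag (fun l => x l t k) (γ k) i]
    rwa [he] at h
  have hxik : ∀ i k t, 0 ≤ t → HasDerivAt (fun s => x i s k)
      (f (x i t) t k + c t * (γ k * ∑ l, A i l * x l t k)) t :=
    fun i k t ht => hasDerivAt_pi.mp (hODE' i t ht) k
  -- derivative of W along the flow
  have hWD : ∀ t, 0 ≤ t → HasDerivAt (fun s => Stmt12Aux.Wf ξ (fun i => x i s))
      (2 * Stmt12Aux.Ff ξ (fun i => x i t) (fun i => f (x i t) t)
        + 4 * c t * Stmt12Aux.Qf ξ A γ (fun i => x i t)) t := by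
    intro t ht
    have hderiv : HasDerivAt
        (fun s => ∑ i, ∑ j, ξ i * ξ j * ∑ k, (x i s k - x j s k) ^ 2)
        (∑ i, ∑ j, ξ i * ξ j * ∑ k, (2 * (x i t k - x j t k) *
          ((f (x i t) t k + c t * (γ k * ∑ l, A i l * x l t k))
            - (f (x j t) t k + c t * (γ k * ∑ l, A j l * x l t k))))) t := by
      refine HasDerivAt.fun_sum fun i _ => ?_
      refine HasDerivAt.fun_sum fun j _ => ?_
      refine HasDerivAt.const_mul (ξ i * ξ j) ?_
      refine HasDerivAt.fun_sum fun k _ => ?_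
      simpa using (((hxik i k t ht).fun_sub (hxik j k t ht)).fun_pow 2)
    have heq : (∑ i, ∑ j, ξ i * ξ j * ∑ k, (2 * (x i t k - x j t k) *
          ((f (x i t) t k + c t * (γ k * ∑ l, A i l * x l t k))
            - (f (x j t) t k + c t * (γ k * ∑ l, A j l * x l t k)))))
        = 2 * Stmt12Aux.Ff ξ (fun i => x i t) (fun i => f (x i t) t)
          + 4 * c t * Stmt12Aux.Qf ξ A γ (fun i => x i t) :=
      Stmt12Aux.derivW_eq ξ A γ hξsum hcol (fun i => x i t) (fun i => f (x i t) t) (c t)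
    exact heq ▸ hderiv
  -- Lyapunov function
  set V : ℝ → ℝ :=
    fun t => Stmt12Aux.Wf ξ (fun i => x i t) / 2 + (2 / α) * (c t - m) ^ 2 with hVdef
  clear_value V
  have hVD : ∀ t, 0 ≤ t → HasDerivAt V
      (Stmt12Aux.Ff ξ (fun i => x i t) (fun i => f (x i t) t)
        + 2 * m * Stmt12Aux.Qf ξ A γ (fun i => x i t)) t := by
    intro t ht
    have h1 := (hWD t ht).div_const 2
    have h2 : HasDerivAt (fun s => (2 / α) * (c s - m) ^ 2)
        ((2 / α) * (2 * (c t - m) * (-(α / 2) * Stmt12Aux.Qf ξ A γ (fun i => x i t)))) t := by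
      have h3 := (((hcD t ht).sub_const m).pow 2).const_mul (2 / α)
      simpa using h3
    have h4 := h1.add h2
    have heq : (2 * Stmt12Aux.Ff ξ (fun i => x i t) (fun i => f (x i t) t)
          + 4 * c t * Stmt12Aux.Qf ξ A γ (fun i => x i t)) / 2
        + ((2 / α) * (2 * (c t - m) * (-(α / 2) * Stmt12Aux.Qf ξ A γ (fun i => x i t))))
        = Stmt12Aux.Ff ξ (fun i => x i t) (fun i => f (x i t) t)
          + 2 * m * Stmt12Aux.Qf ξ A γ (fun i => x i t) := by
      field_simp
      ring
    rw [hVdef]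
    exact heq ▸ h4
  -- the key differential inequality
  have hV'le : ∀ t, 0 ≤ t →
      Stmt12Aux.Ff ξ (fun i => x i t) (fun i => f (x i t) t)
        + 2 * m * Stmt12Aux.Qf ξ A γ (fun i => x i t)
      ≤ -ϖ * Stmt12Aux.Wf ξ (fun i => x i t) := by
    intro t ht
    have hFle : Stmt12Aux.Ff ξ (fun i => x i t) (fun i => f (x i t) t)
        ≤ (D - ϖ) * Stmt12Aux.Wf ξ (fun i => x i t) := by
      simp only [Stmt12Aux.Ff, Stmt12Aux.Wf]
      rw [Finset.mul_sum]
      refine Finset.sum_le_sum fun i _ => ?_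
      rw [Finset.mul_sum]
      refine Finset.sum_le_sum fun j _ => ?_
      have hq := hQUAD (x i t) (x j t) t ht
      have hδ : ∑ k, δ k * (x i t k - x j t k) ^ 2
          ≤ D * ∑ k, (x i t k - x j t k) ^ 2 := by
        rw [hDdef, Finset.mul_sum]
        refine Finset.sum_le_sum fun k _ => ?_
        refine mul_le_mul_of_nonneg_right ?_ (sq_nonneg _)
        exact (le_abs_self _).trans (Finset.single_le_sum
          (f := fun k' => |δ k'|) (fun _ _ => abs_nonneg _) (Finset.mem_univ k))
      have hG : ∑ k, (x i t k - x j t k) * (f (x i t) t k - f (x j t) t k)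
          ≤ (D - ϖ) * ∑ k, (x i t k - x j t k) ^ 2 := by nlinarith [hq, hδ]
      calc ξ i * ξ j * ∑ k, (x i t k - x j t k) * (f (x i t) t k - f (x j t) t k)
          ≤ ξ i * ξ j * ((D - ϖ) * ∑ k, (x i t k - x j t k) ^ 2) :=
            mul_le_mul_of_nonneg_left hG (mul_nonneg (hξnn i) (hξnn j))
        _ = (D - ϖ) * (ξ i * ξ j * ∑ k, (x i t k - x j t k) ^ 2) := by ring
    have h2' : D * Stmt12Aux.Wf ξ (fun i => x i t)
        ≤ m * Stmt12Aux.Rf ξ A γ (fun i => x i t) := by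
      calc D * Stmt12Aux.Wf ξ (fun i => x i t)
          = m * (κ * Stmt12Aux.Wf ξ (fun i => x i t)) := by rw [← hmκ]; ring
        _ ≤ m * Stmt12Aux.Rf ξ A γ (fun i => x i t) :=
            mul_le_mul_of_nonneg_left (hgap _) hm0
    have h3 : 2 * m * Stmt12Aux.Qf ξ A γ (fun i => x i t)
        = -(m * Stmt12Aux.Rf ξ A γ (fun i => x i t)) := by
      rw [hRQ (fun i => x i t)]; ring
    linarith [hFle, h2', h3]
  have hVanti : AntitoneOn V (Set.Ici 0) := by
    refine Stmt12Aux.antitoneOn_of_hasDerivAt hVD (fun t ht => ?_)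
    have h1 := hV'le t ht
    have h2 := mul_nonneg hϖ.le (hW0 (fun i => x i t))
    linarith
  have hcmono : MonotoneOn c (Set.Ici 0) := by
    refine Stmt12Aux.monotoneOn_of_hasDerivAt hcD (fun t ht => ?_)
    have h1 : -(α / 2) * Stmt12Aux.Qf ξ A γ (fun i => x i t)
        = (α / 4) * Stmt12Aux.Rf ξ A γ (fun i => x i t) := by
      rw [hRQ (fun i => x i t)]; ring
    rw [h1]
    exact mul_nonneg (by positivity) (hR0 _)
  have hVnn : ∀ t, 0 ≤ V t := by
    intro t
    rw [hVdef]
    exact add_nonneg (div_nonneg (hW0 _) (by norm_num))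
      (mul_nonneg (by positivity) (sq_nonneg _))
  have hVle0 : ∀ t, 0 ≤ t → V t ≤ V 0 :=
    fun t ht => hVanti Set.self_mem_Ici ht ht
  have hcbd : ∀ t, 0 ≤ t → c t ≤ m + Real.sqrt ((α / 2) * V 0) := by
    intro t ht
    have h1 : (2 / α) * (c t - m) ^ 2 ≤ V 0 := by
      have h2 := hVle0 t ht
      have h3 := hW0 (fun i => x i t)
      have h4 : (2 / α) * (c t - m) ^ 2 ≤ V t := by
        rw [hVdef]
        simp only []
        linarith
      linarith
    have h3 : (c t - m) ^ 2 ≤ (α / 2) * V 0 := by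
      have h5 := mul_le_mul_of_nonneg_left h1 (le_of_lt (by positivity : (0:ℝ) < α / 2))
      calc (c t - m) ^ 2 = (α / 2) * ((2 / α) * (c t - m) ^ 2) := by
            field_simp
        _ ≤ (α / 2) * V 0 := h5
    have h4 : c t - m ≤ Real.sqrt ((α / 2) * V 0) := by
      have h5 : |c t - m| = Real.sqrt ((c t - m) ^ 2) := (Real.sqrt_sq_eq_abs _).symm
      have h6 := Real.sqrt_le_sqrt h3
      have h7 := le_abs_self (c t - m)
      linarith
    linarith
  obtain ⟨c₀, hc₀tend, hc₀ge⟩ := Stmt12Aux.tendsto_of_monotoneOn hcmono hcbd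
  have hc₀0 : 0 ≤ c₀ := hc0 ▸ hc₀ge
  obtain ⟨vL, hvLtend⟩ :=
    Stmt12Aux.tendsto_of_antitoneOn hVanti (M := 0) (fun t _ => hVnn t)
  have hWexpr : ∀ t, Stmt12Aux.Wf ξ (fun i => x i t)
      = 2 * V t - (4 / α) * (c t - m) ^ 2 := by
    intro t
    rw [hVdef]
    simp only []
    field_simp
    ring
  have hWtend : Tendsto (fun t => Stmt12Aux.Wf ξ (fun i => x i t)) atTop
      (nhds (2 * vL - (4 / α) * (c₀ - m) ^ 2)) := by
    have h1 : Tendsto (fun t => 2 * V t - (4 / α) * (c t - m) ^ 2) atTop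
        (nhds (2 * vL - (4 / α) * (c₀ - m) ^ 2)) := by
      refine Tendsto.sub (hvLtend.const_mul 2) ?_
      exact ((hc₀tend.sub_const m).pow 2).const_mul (4 / α)
    exact h1.congr fun t => (hWexpr t).symm
  set w : ℝ := 2 * vL - (4 / α) * (c₀ - m) ^ 2 with hwdef
  clear_value w
  have h0w : 0 ≤ w :=
    ge_of_tendsto hWtend (Eventually.of_forall fun t => hW0 (fun i => x i t))
  have hwle : w ≤ 0 := by
    by_contra hpos'
    push_neg at hpos'
    obtain ⟨t₁, ht₁⟩ := Filter.eventually_atTop.mp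
      ((hWtend.eventually (eventually_gt_nhds (by linarith : w / 2 < w))).and
        (eventually_ge_atTop (0:ℝ)))
    have ht₁0 : (0:ℝ) ≤ t₁ := (ht₁ t₁ le_rfl).2
    set P : ℝ := ϖ * (w / 2) with hPdef
    clear_value P
    have hP : 0 < P := by
      rw [hPdef]
      exact mul_pos hϖ (by linarith)
    have hφd : ∀ t, t₁ ≤ t → HasDerivAt (fun s => V s + P * s)
        ((Stmt12Aux.Ff ξ (fun i => x i t) (fun i => f (x i t) t)
          + 2 * m * Stmt12Aux.Qf ξ A γ (fun i => x i t)) + P) t := by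
      intro t ht
      exact (hVD t (ht₁0.trans ht)).add (by simpa using (hasDerivAt_id t).const_mul P)
    have hφanti : AntitoneOn (fun s => V s + P * s) (Set.Ici t₁) := by
      refine Stmt12Aux.antitoneOn_of_hasDerivAt hφd (fun t ht => ?_)
      have h1 := hV'le t (ht₁0.trans ht)
      have h2 := (ht₁ t ht).1
      have h3 : -ϖ * Stmt12Aux.Wf ξ (fun i => x i t) ≤ -P := by
        rw [hPdef]
        nlinarith [hϖ, h2]
      linarith
    set T : ℝ := t₁ + (V t₁ + 1) / P with hTdef
    clear_value T
    have hT1 : t₁ ≤ T := by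
      rw [hTdef]
      have := hVnn t₁
      have : (0:ℝ) ≤ (V t₁ + 1) / P := div_nonneg (by linarith) hP.le
      linarith
    have hanti := hφanti Set.self_mem_Ici hT1 hT1
    have hPT : P * (T - t₁) = V t₁ + 1 := by
      rw [hTdef]
      field_simp
      ring
    have hVTnn := hVnn T
    simp only [] at hanti
    nlinarith [hanti, hPT, hVTnn]
  have hwzero : w = 0 := le_antisymm hwle h0w
  rw [hwzero] at hWtend
  constructor
  · intro i j
    have hle : ∀ t, ‖x i t - x j t‖
        ≤ Real.sqrt (Stmt12Aux.Wf ξ (fun i' => x i' t) / (ξ i * ξ j)) := by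
      intro t
      rw [pi_norm_le_iff_of_nonneg (Real.sqrt_nonneg _)]
      intro k
      rw [Pi.sub_apply, Real.norm_eq_abs, ← Real.sqrt_sq_eq_abs]
      apply Real.sqrt_le_sqrt
      have h1 : ξ i * ξ j * ∑ k', (x i t k' - x j t k') ^ 2
          ≤ Stmt12Aux.Wf ξ (fun i' => x i' t) :=
        Stmt12Aux.pair_le_Wf ξ hξnn (fun i' => x i' t) i j
      have h2 : (x i t k - x j t k) ^ 2 ≤ ∑ k', (x i t k' - x j t k') ^ 2 :=
        Finset.single_le_sum (f := fun k' => (x i t k' - x j t k') ^ 2)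
          (fun _ _ => sq_nonneg _) (Finset.mem_univ k)
      rw [le_div_iff₀ (mul_pos (hξpos i) (hξpos j))]
      nlinarith [h1, h2, mul_nonneg (hξnn i) (hξnn j)]
    have hsq : Tendsto (fun t => Real.sqrt (Stmt12Aux.Wf ξ (fun i' => x i' t) / (ξ i * ξ j)))
        atTop (nhds 0) := by
      have h1 := hWtend.div_const (ξ i * ξ j)
      rw [zero_div] at h1
      have h2 := (Real.continuous_sqrt.tendsto 0).comp h1
      rw [Real.sqrt_zero] at h2
      exact h2
    exact tendsto_of_tendsto_of_tendsto_of_le_of_le tendsto_const_nhds hsq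
      (fun t => norm_nonneg _) hle
  · exact ⟨c₀, hc₀0, hc₀tend⟩
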